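/- Let v : [0,∞) × ℝ → ℝ and define its 5-lift ṽ : ℝ⁵ → ℝ by ṽ(x₁,…,x₅) := v((x₁² + x₂² + x₃² + x₄²)^{1/2}, x₅). If v is C¹ on [0,∞) × ℝ and ∂_ρ v(ρ, z) → 0 as ρ → 0 (locally uniformly in z), then ṽ ∈ C¹(ℝ⁵). -/

import Mathlib

/-- The 5-lift of a function on the meridian half-plane. -/
noncomputable def lift5 (v : ℝ × ℝ → ℝ) (x : EuclideanSpace ℝ (Fin 5)) : ℝ :=
  v (Real.sqrt ((x 0)^2 + (x 1)^2 + (x 2)^2 + (x 3)^2), x 4)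

open Set Asymptotics

namespace Lift5Aux

noncomputable def q (x : EuclideanSpace ℝ (Fin 5)) : ℝ :=
  (x 0)^2 + (x 1)^2 + (x 2)^2 + (x 3)^2

noncomputable def rr (x : EuclideanSpace ℝ (Fin 5)) : ℝ := Real.sqrt (q x)

noncomputable def pj (i : Fin 5) : EuclideanSpace ℝ (Fin 5) →L[ℝ] ℝ :=
  EuclideanSpace.proj i

noncomputable def nn (x : EuclideanSpace ℝ (Fin 5)) : EuclideanSpace ℝ (Fin 5) →L[ℝ] ℝ :=
  (x 0) • pj 0 + (x 1) • pj 1 + (x 2) • pj 2 + (x 3) • pj 3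

noncomputable def dr (x : EuclideanSpace ℝ (Fin 5)) : EuclideanSpace ℝ (Fin 5) →L[ℝ] ℝ :=
  (rr x)⁻¹ • nn x

lemma pj_apply (i : Fin 5) (x : EuclideanSpace ℝ (Fin 5)) : pj i x = x i := rfl

lemma nn_apply (x h : EuclideanSpace ℝ (Fin 5)) :
    nn x h = x 0 * h 0 + x 1 * h 1 + x 2 * h 2 + x 3 * h 3 := by
  simp [nn, pj_apply]

lemma q_nonneg (x : EuclideanSpace ℝ (Fin 5)) : 0 ≤ q x := by unfold q; positivity

lemma rr_nonneg (x : EuclideanSpace ℝ (Fin 5)) : 0 ≤ rr x := Real.sqrt_nonneg _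

lemma sq_rr (x : EuclideanSpace ℝ (Fin 5)) : rr x ^ 2 = q x := Real.sq_sqrt (q_nonneg x)

lemma coords_eq_zero {x : EuclideanSpace ℝ (Fin 5)} (h : q x = 0) :
    x 0 = 0 ∧ x 1 = 0 ∧ x 2 = 0 ∧ x 3 = 0 := by
  unfold q at h
  have h0 : (x 0) ^ 2 = (0:ℝ) := by nlinarith [sq_nonneg (x 0), sq_nonneg (x 1), sq_nonneg (x 2), sq_nonneg (x 3)]
  have h1 : (x 1) ^ 2 = (0:ℝ) := by nlinarith [sq_nonneg (x 0), sq_nonneg (x 1), sq_nonneg (x 2), sq_nonneg (x 3)]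
  have h2 : (x 2) ^ 2 = (0:ℝ) := by nlinarith [sq_nonneg (x 0), sq_nonneg (x 1), sq_nonneg (x 2), sq_nonneg (x 3)]
  have h3 : (x 3) ^ 2 = (0:ℝ) := by nlinarith [sq_nonneg (x 0), sq_nonneg (x 1), sq_nonneg (x 2), sq_nonneg (x 3)]
  exact ⟨pow_eq_zero_iff two_ne_zero |>.mp h0, pow_eq_zero_iff two_ne_zero |>.mp h1,
    pow_eq_zero_iff two_ne_zero |>.mp h2, pow_eq_zero_iff two_ne_zero |>.mp h3⟩

lemma rr_eq_zero {x : EuclideanSpace ℝ (Fin 5)} (h : q x = 0) : rr x = 0 := by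
  simp [rr, h]

lemma sum_sq_le_normsq (x : EuclideanSpace ℝ (Fin 5)) : q x ≤ ‖x‖^2 := by
  have h := EuclideanSpace.norm_eq x
  have h2 : ‖x‖^2 = ∑ i : Fin 5, ‖x i‖^2 := by
    rw [h, Real.sq_sqrt]; positivity
  rw [h2, Fin.sum_univ_five]
  simp only [Real.norm_eq_abs, sq_abs]
  unfold q
  nlinarith [sq_nonneg (x 4)]

lemma rr_le_norm (x : EuclideanSpace ℝ (Fin 5)) : rr x ≤ ‖x‖ := by
  rw [rr]
  calc Real.sqrt (q x) ≤ Real.sqrt (‖x‖^2) := Real.sqrt_le_sqrt (sum_sq_le_normsq x)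
    _ = ‖x‖ := Real.sqrt_sq (norm_nonneg x)

lemma coord_abs_le (x : EuclideanSpace ℝ (Fin 5)) (i : Fin 5) : |x i| ≤ ‖x‖ := by
  have h2 : (x i)^2 ≤ ‖x‖^2 := by
    have h : ‖x‖^2 = ∑ j : Fin 5, ‖x j‖^2 := by
      rw [EuclideanSpace.norm_eq, Real.sq_sqrt]; positivity
    rw [h]
    calc (x i)^2 = ‖x i‖^2 := by simp [sq_abs]
      _ ≤ ∑ j : Fin 5, ‖x j‖^2 :=
        Finset.single_le_sum (f := fun j => ‖x j‖^2) (fun j _ => by positivity) (Finset.mem_univ i)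
  calc |x i| = Real.sqrt ((x i)^2) := (Real.sqrt_sq_eq_abs _).symm
    _ ≤ Real.sqrt (‖x‖^2) := Real.sqrt_le_sqrt h2
    _ = ‖x‖ := Real.sqrt_sq (norm_nonneg x)

lemma nn_bound (x h : EuclideanSpace ℝ (Fin 5)) : |nn x h| ≤ rr x * ‖h‖ := by
  have hh : (h 0)^2 + (h 1)^2 + (h 2)^2 + (h 3)^2 ≤ ‖h‖^2 := sum_sq_le_normsq h
  have key : (nn x h)^2 ≤ (rr x * ‖h‖)^2 := by
    rw [mul_pow, sq_rr, nn_apply]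
    have hq := q_nonneg x
    unfold q at hq ⊢
    nlinarith [sq_nonneg (x 0 * h 1 - x 1 * h 0), sq_nonneg (x 0 * h 2 - x 2 * h 0),
      sq_nonneg (x 0 * h 3 - x 3 * h 0), sq_nonneg (x 1 * h 2 - x 2 * h 1),
      sq_nonneg (x 1 * h 3 - x 3 * h 1), sq_nonneg (x 2 * h 3 - x 3 * h 2),
      sq_nonneg (h 0), sq_nonneg (h 1), sq_nonneg (h 2), sq_nonneg (h 3)]
  calc |nn x h| = Real.sqrt ((nn x h)^2) := (Real.sqrt_sq_eq_abs _).symm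
    _ ≤ Real.sqrt ((rr x * ‖h‖)^2) := Real.sqrt_le_sqrt key
    _ = rr x * ‖h‖ := Real.sqrt_sq (mul_nonneg (rr_nonneg x) (norm_nonneg h))

lemma dr_apply (x h : EuclideanSpace ℝ (Fin 5)) : dr x h = (rr x)⁻¹ * nn x h := rfl

lemma dr_norm_le (x : EuclideanSpace ℝ (Fin 5)) : ‖dr x‖ ≤ 1 := by
  refine ContinuousLinearMap.opNorm_le_bound _ zero_le_one fun h => ?_
  rw [dr_apply, one_mul, Real.norm_eq_abs, abs_mul, abs_inv]
  rcases eq_or_lt_of_le (rr_nonneg x) with h0 | hpos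
  · have hq : q x = 0 := by
      have := sq_rr x; rw [← h0] at this; simpa using this.symm
    obtain ⟨h1, h2, h3, h4⟩ := coords_eq_zero hq
    simp [nn_apply, h1, h2, h3, h4, ← h0]
  · have hb := nn_bound x h
    rw [abs_of_pos hpos]
    calc (rr x)⁻¹ * |nn x h| ≤ (rr x)⁻¹ * (rr x * ‖h‖) := by
          exact mul_le_mul_of_nonneg_left hb (inv_nonneg.mpr (rr_nonneg x))
      _ = ‖h‖ := by field_simp

lemma cont_coord (i : Fin 5) : Continuous fun x : EuclideanSpace ℝ (Fin 5) => x i :=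
  (pj i).continuous

lemma cont_q : Continuous q := by
  unfold q
  exact (((cont_coord 0).pow 2).add ((cont_coord 1).pow 2)).add
    (((cont_coord 2).pow 2).add ((cont_coord 3).pow 2)) |>.congr (by intro x; simp only [Pi.add_apply, Pi.pow_apply]; ring)

lemma cont_rr : Continuous rr := Real.continuous_sqrt.comp cont_q

lemma cont_nn : Continuous nn := by
  unfold nn
  exact (((cont_coord 0).smul (continuous_const (y := pj 0))).add ((cont_coord 1).smul (continuous_const (y := pj 1)))).add
    (((cont_coord 2).smul (continuous_const (y := pj 2))).add ((cont_coord 3).smul (continuous_const (y := pj 3)))) |>.congr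
    (by intro x; simp only [Pi.add_apply, Pi.smul_apply']; abel)

lemma hasFDerivAt_q (x : EuclideanSpace ℝ (Fin 5)) : HasFDerivAt q ((2:ℝ) • nn x) x := by
  have h : ∀ i : Fin 5, HasFDerivAt (fun y : EuclideanSpace ℝ (Fin 5) => (y i)^2)
      ((2 * x i) • pj i) x := by
    intro i
    have := (hasDerivAt_pow 2 (x i)).comp_hasFDerivAt x (pj i).hasFDerivAt
    simpa [pj_apply, Function.comp_def] using this
  have hsum := (((h 0).add (h 1)).add ((h 2).add (h 3)))
  have heqf : q = fun y : EuclideanSpace ℝ (Fin 5) => ((y 0)^2 + (y 1)^2) + ((y 2)^2 + (y 3)^2) := by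
    funext y; unfold q; ring
  have heqd : (2 * x 0) • pj 0 + (2 * x 1) • pj 1 + ((2 * x 2) • pj 2 + (2 * x 3) • pj 3)
      = (2:ℝ) • nn x := by
    ext y
    simp [nn, pj_apply]
    ring
  rw [heqf, ← heqd]
  exact hsum

lemma hasFDerivAt_rr {x : EuclideanSpace ℝ (Fin 5)} (hx : q x ≠ 0) :
    HasFDerivAt rr (dr x) x := by
  have hr : rr x ≠ 0 := by
    intro h; apply hx
    have := sq_rr x; rw [h] at this; simpa using this.symm
  have := (Real.hasDerivAt_sqrt hx).comp_hasFDerivAt x (hasFDerivAt_q x)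
  have heq : (1 / (2 * Real.sqrt (q x))) • ((2:ℝ) • nn x) = dr x := by
    ext h
    rw [dr_apply]
    simp only [ContinuousLinearMap.coe_smul', Pi.smul_apply, smul_eq_mul]
    rw [show Real.sqrt (q x) = rr x from rfl]
    field_simp
  rw [heq] at this
  exact this



def SS : Set (ℝ × ℝ) := Set.Ici (0:ℝ) ×ˢ (Set.univ : Set ℝ)

lemma mem_SS' {p : ℝ × ℝ} (h : 0 ≤ p.1) : p ∈ SS := ⟨h, Set.mem_univ _⟩

lemma uniqueDiffOn_SS : UniqueDiffOn ℝ SS := (uniqueDiffOn_Ici 0).prod uniqueDiffOn_univ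

variable (v : ℝ × ℝ → ℝ)

noncomputable def Dv (x : EuclideanSpace ℝ (Fin 5)) : (ℝ × ℝ) →L[ℝ] ℝ :=
  fderivWithin ℝ v SS (rr x, x 4)

noncomputable def LL (x : EuclideanSpace ℝ (Fin 5)) : EuclideanSpace ℝ (Fin 5) →L[ℝ] ℝ :=
  (Dv v x (1,0)) • dr x + (Dv v x (0,1)) • pj 4

variable {v}

lemma cont_Dv (hv : ContDiffOn ℝ 1 v SS) : Continuous (Dv v) := by
  have h1 : ContinuousOn (fderivWithin ℝ v SS) SS :=
    hv.continuousOn_fderivWithin uniqueDiffOn_SS le_rfl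
  exact h1.comp_continuous (cont_rr.prodMk (cont_coord 4)) fun x => mem_SS' (rr_nonneg x)

lemma cont_Dv_apply (hv : ContDiffOn ℝ 1 v SS) (w : ℝ × ℝ) :
    Continuous fun x => Dv v x w :=
  (ContinuousLinearMap.apply ℝ ℝ w).continuous.comp (cont_Dv hv)

-- on the axis, the radial derivative vanishes
lemma A_axis
    (hax : ∀ z₀ : ℝ, ∀ ε > (0:ℝ), ∃ δ > (0:ℝ), ∀ ρ z : ℝ, 0 ≤ ρ → ρ < δ → |z - z₀| < δ →
      |fderivWithin ℝ v SS (ρ, z) (1, 0)| < ε)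
    {x : EuclideanSpace ℝ (Fin 5)} (h0 : q x = 0) : Dv v x (1,0) = 0 := by
  rw [Dv, rr_eq_zero h0]
  by_contra hne
  obtain ⟨δ, hδ, hP⟩ := hax (x 4) _ (abs_pos.mpr hne)
  exact absurd (hP 0 (x 4) le_rfl hδ (by simpa using hδ)) (lt_irrefl _)

lemma hasFDerivAt_offaxis (hv : ContDiffOn ℝ 1 v SS)
    {x : EuclideanSpace ℝ (Fin 5)} (hx : q x ≠ 0) :
    HasFDerivAt (lift5 v) (LL v x) x := by
  have hrpos : 0 < rr x := by
    rcases eq_or_lt_of_le (rr_nonneg x) with h | h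
    · exact absurd (by rw [← sq_rr x, ← h]; simp) hx
    · exact h
  have hmem : SS ∈ nhds (rr x, x 4) := by
    rw [mem_nhds_iff]
    exact ⟨Set.Ioi 0 ×ˢ Set.univ,
      Set.prod_mono Set.Ioi_subset_Ici_self subset_rfl,
      isOpen_Ioi.prod isOpen_univ, ⟨hrpos, Set.mem_univ _⟩⟩
  have hd : HasFDerivAt v (Dv v x) (rr x, x 4) := by
    rw [Dv, fderivWithin_of_mem_nhds hmem]
    exact ((hv.contDiffAt hmem).differentiableAt one_ne_zero).hasFDerivAt
  have hφ : HasFDerivAt (fun y : EuclideanSpace ℝ (Fin 5) => (rr y, y 4))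
      ((dr x).prod (pj 4)) x :=
    (hasFDerivAt_rr hx).prodMk (pj 4).hasFDerivAt
  have hcomp := hd.comp x hφ
  have heqf : lift5 v = v ∘ fun y : EuclideanSpace ℝ (Fin 5) => (rr y, y 4) := rfl
  have heqd : (Dv v x).comp ((dr x).prod (pj 4)) = LL v x := by
    ext h
    have hvec : (dr x h, pj 4 h) = (dr x h) • ((1:ℝ),(0:ℝ)) + (pj 4 h) • ((0:ℝ),(1:ℝ)) := by
      simp [Prod.ext_iff]
    simp only [ContinuousLinearMap.coe_comp', Function.comp_apply,
      ContinuousLinearMap.prod_apply, LL, ContinuousLinearMap.add_apply,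
      ContinuousLinearMap.coe_smul', Pi.smul_apply, smul_eq_mul]
    rw [hvec, map_add, map_smul, map_smul, smul_eq_mul, smul_eq_mul]
    ring
  rw [heqf, ← heqd]
  exact hcomp

lemma hasDerivAt_vline (hv : ContDiffOn ℝ 1 v SS) (z0 : ℝ) :
    HasDerivAt (fun t => v (0, t)) (fderivWithin ℝ v SS (0, z0) (0,1)) z0 := by
  have hdv : HasFDerivWithinAt v (fderivWithin ℝ v SS (0,z0)) SS (0,z0) :=
    ((hv.differentiableOn one_ne_zero) (0,z0) (mem_SS' le_rfl)).hasFDerivWithinAt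
  have hι : HasDerivWithinAt (fun t : ℝ => ((0:ℝ), t)) ((0:ℝ),(1:ℝ)) Set.univ z0 :=
    ((hasDerivAt_const z0 (0:ℝ)).prodMk (hasDerivAt_id z0)).hasDerivWithinAt
  have := hdv.comp_hasDerivWithinAt z0 hι (fun t _ => mem_SS' le_rfl)
  rw [hasDerivWithinAt_univ] at this
  exact this

lemma mvt (hv : ContDiffOn ℝ 1 v SS) {ρ z C : ℝ} (hρ : 0 ≤ ρ)
    (hC : ∀ t ∈ Set.Icc 0 ρ, |fderivWithin ℝ v SS (t, z) (1,0)| ≤ C) :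
    |v (ρ, z) - v (0, z)| ≤ C * ρ := by
  have hder : ∀ t ∈ Set.Icc (0:ℝ) ρ, HasDerivWithinAt (fun t => v (t, z))
      (fderivWithin ℝ v SS (t, z) (1,0)) (Set.Icc 0 ρ) t := by
    intro t ht
    have hdv : HasFDerivWithinAt v (fderivWithin ℝ v SS (t,z)) SS (t,z) :=
      ((hv.differentiableOn one_ne_zero) (t,z) (mem_SS' ht.1)).hasFDerivWithinAt
    have hι : HasDerivWithinAt (fun s : ℝ => (s, z)) ((1:ℝ),(0:ℝ)) (Set.Icc 0 ρ) t :=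
      ((hasDerivAt_id t).prodMk (hasDerivAt_const t z)).hasDerivWithinAt
    exact hdv.comp_hasDerivWithinAt t hι (fun s hs => mem_SS' hs.1)
  have := norm_image_sub_le_of_norm_deriv_le_segment' hder
    (fun t ht => hC t (Set.mem_Icc_of_Ico ht)) ρ (Set.right_mem_Icc.mpr hρ)
  simpa using this



lemma hasFDerivAt_axis (hv : ContDiffOn ℝ 1 v SS)
    (hax : ∀ z₀ : ℝ, ∀ ε > (0:ℝ), ∃ δ > (0:ℝ), ∀ ρ z : ℝ, 0 ≤ ρ → ρ < δ → |z - z₀| < δ →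
      |fderivWithin ℝ v SS (ρ, z) (1, 0)| < ε)
    {x0 : EuclideanSpace ℝ (Fin 5)} (h0 : q x0 = 0) :
    HasFDerivAt (lift5 v) (LL v x0) x0 := by
  obtain ⟨hc0, hc1, hc2, hc3⟩ := coords_eq_zero h0
  have hr0 : rr x0 = 0 := rr_eq_zero h0
  set z0 := x0 4 with hz0
  set B := fderivWithin ℝ v SS (0, z0) (0,1) with hB
  have hLL : ∀ h : EuclideanSpace ℝ (Fin 5), LL v x0 h = B * h 4 := by
    intro h
    simp only [LL, ContinuousLinearMap.add_apply, ContinuousLinearMap.coe_smul',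
      Pi.smul_apply, smul_eq_mul, dr_apply, nn_apply, hc0, hc1, hc2, hc3, pj_apply]
    rw [Dv, hr0]
    ring
  rw [hasFDerivAt_iff_isLittleO_nhds_zero, isLittleO_iff]
  intro c hc
  have hc2' : (0:ℝ) < c/2 := by linarith
  obtain ⟨δ₁, hδ₁, hP⟩ := hax z0 (c/2) hc2'
  have hg := hasDerivAt_vline hv z0
  rw [hasDerivAt_iff_isLittleO, isLittleO_iff] at hg
  have hg2 := hg hc2'
  rw [Metric.eventually_nhds_iff] at hg2
  obtain ⟨δ₂, hδ₂, hQ⟩ := hg2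
  rw [Metric.eventually_nhds_iff]
  refine ⟨min δ₁ δ₂, lt_min hδ₁ hδ₂, fun h hh => ?_⟩
  rw [dist_zero_right] at hh
  -- basic bounds
  have hsum4 : (x0 + h) 4 = z0 + h 4 := rfl
  have hqeq : q (x0 + h) = q h := by
    unfold q
    have e : ∀ i : Fin 5, (x0 + h) i = x0 i + h i := fun i => rfl
    rw [e 0, e 1, e 2, e 3, hc0, hc1, hc2, hc3]
    ring
  have hrle : rr (x0 + h) ≤ ‖h‖ := by
    rw [rr, hqeq]
    exact rr_le_norm h
  have hrlt : rr (x0 + h) < δ₁ := lt_of_le_of_lt hrle (lt_of_lt_of_le hh (min_le_left _ _))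
  have h4le : |h 4| ≤ ‖h‖ := coord_abs_le h 4
  have h4lt1 : |h 4| < δ₁ := lt_of_le_of_lt h4le (lt_of_lt_of_le hh (min_le_left _ _))
  have h4lt2 : |h 4| < δ₂ := lt_of_le_of_lt h4le (lt_of_lt_of_le hh (min_le_right _ _))
  have hz4 : |z0 + h 4 - z0| < δ₁ := by simpa using h4lt1
  -- the two pieces
  have hterm1 : |v (rr (x0 + h), z0 + h 4) - v (0, z0 + h 4)| ≤ c/2 * ‖h‖ := by
    have := mvt hv (rr_nonneg (x0 + h)) (C := c/2) (z := z0 + h 4) (fun t ht =>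
      le_of_lt (hP t (z0 + h 4) ht.1 (lt_of_le_of_lt ht.2 hrlt) hz4))
    calc |v (rr (x0 + h), z0 + h 4) - v (0, z0 + h 4)| ≤ c/2 * rr (x0 + h) := this
      _ ≤ c/2 * ‖h‖ := mul_le_mul_of_nonneg_left hrle (le_of_lt hc2')
  have hterm2 : |v (0, z0 + h 4) - v (0, z0) - B * h 4| ≤ c/2 * ‖h‖ := by
    have hq2 := hQ (y := z0 + h 4) (by rw [Real.dist_eq]; simpa using h4lt2)
    simp only [Real.norm_eq_abs, smul_eq_mul, add_sub_cancel_left] at hq2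
    calc |v (0, z0 + h 4) - v (0, z0) - B * h 4|
        = |v (0, z0 + h 4) - v (0, z0) - h 4 * B| := by ring_nf
      _ ≤ c/2 * |h 4| := hq2
      _ ≤ c/2 * ‖h‖ := mul_le_mul_of_nonneg_left h4le (le_of_lt hc2')
  -- assemble
  have hl5x : lift5 v (x0 + h) = v (rr (x0 + h), z0 + h 4) := rfl
  have hl5x0 : lift5 v x0 = v (0, z0) := by
    show v (rr x0, x0 4) = v (0, z0)
    rw [hr0]
  rw [Real.norm_eq_abs, hl5x, hl5x0, hLL]
  calc |v (rr (x0 + h), z0 + h 4) - v (0, z0) - B * h 4|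
      = |(v (rr (x0 + h), z0 + h 4) - v (0, z0 + h 4))
          + (v (0, z0 + h 4) - v (0, z0) - B * h 4)| := by ring_nf
    _ ≤ |v (rr (x0 + h), z0 + h 4) - v (0, z0 + h 4)|
          + |v (0, z0 + h 4) - v (0, z0) - B * h 4| := abs_add_le _ _
    _ ≤ c/2 * ‖h‖ + c/2 * ‖h‖ := add_le_add hterm1 hterm2
    _ = c * ‖h‖ := by ring

set_option maxHeartbeats 1000000 in
lemma cont_LL (hv : ContDiffOn ℝ 1 v SS)
    (hax : ∀ z₀ : ℝ, ∀ ε > (0:ℝ), ∃ δ > (0:ℝ), ∀ ρ z : ℝ, 0 ≤ ρ → ρ < δ → |z - z₀| < δ →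
      |fderivWithin ℝ v SS (ρ, z) (1, 0)| < ε) :
    Continuous (LL v) := by
  unfold LL
  apply Continuous.add
  · rw [continuous_iff_continuousAt]
    intro x
    by_cases hx : q x = 0
    · have hval : Dv v x (1,0) • dr x = 0 := by rw [A_axis hax hx, zero_smul]
      rw [ContinuousAt, hval]
      apply squeeze_zero_norm (a := fun y => |Dv v y (1,0)|)
      · intro y
        calc ‖Dv v y (1,0) • dr y‖ ≤ ‖Dv v y (1,0)‖ * ‖dr y‖ := ContinuousLinearMap.opNorm_smul_le _ _
          _ = |Dv v y (1,0)| * ‖dr y‖ := by rw [Real.norm_eq_abs]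
          _ ≤ |Dv v y (1,0)| * 1 := mul_le_mul_of_nonneg_left (dr_norm_le y) (abs_nonneg _)
          _ = |Dv v y (1,0)| := mul_one _
      · have : Continuous fun y => |Dv v y (1,0)| := (cont_Dv_apply hv (1,0)).abs
        have h2 := this.tendsto x
        rwa [A_axis hax hx, abs_zero] at h2
    · have hr : rr x ≠ 0 := fun h => hx (by rw [← sq_rr x, h]; simp)
      apply ContinuousAt.smul ((cont_Dv_apply hv (1,0)).continuousAt)
      exact ContinuousAt.smul ((cont_rr.continuousAt).inv₀ hr) cont_nn.continuousAt
  · exact ((cont_Dv_apply hv (0,1)).smul continuous_const)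

end Lift5Aux

theorem lift5_C1
    (v : ℝ × ℝ → ℝ)
    (hv : ContDiffOn ℝ 1 v (Set.Ici (0:ℝ) ×ˢ (Set.univ : Set ℝ)))
    (hax : ∀ z₀ : ℝ, ∀ ε > (0:ℝ), ∃ δ > (0:ℝ), ∀ ρ z : ℝ, 0 ≤ ρ → ρ < δ → |z - z₀| < δ →
      |fderivWithin ℝ v (Set.Ici (0:ℝ) ×ˢ (Set.univ : Set ℝ)) (ρ, z) (1, 0)| < ε) :
    ContDiff ℝ 1 (lift5 v) := by
  have hv' : ContDiffOn ℝ 1 v Lift5Aux.SS := hv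
  have hax' : ∀ z₀ : ℝ, ∀ ε > (0:ℝ), ∃ δ > (0:ℝ), ∀ ρ z : ℝ, 0 ≤ ρ → ρ < δ → |z - z₀| < δ →
      |fderivWithin ℝ v Lift5Aux.SS (ρ, z) (1, 0)| < ε := hax
  have hdiff : ∀ x, HasFDerivAt (lift5 v) (Lift5Aux.LL v x) x := by
    intro x
    by_cases hx : Lift5Aux.q x = 0
    · exact Lift5Aux.hasFDerivAt_axis hv' hax' hx
    · exact Lift5Aux.hasFDerivAt_offaxis hv' hx
  rw [contDiff_one_iff_fderiv]
  refine ⟨fun x => (hdiff x).differentiableAt, ?_⟩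
  have heq : fderiv ℝ (lift5 v) = Lift5Aux.LL v := funext fun x => (hdiff x).fderiv
  rw [heq]
  exact Lift5Aux.cont_LL hv' hax'
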